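/- arXiv:1310.8124 — 2 statements merged into one kernel-verified Lean document; each statement's English description precedes it below -/
import Mathlib

section
/- Let f be a multiplicative ℂ-linear map on m×m complex matrices with fⁿ = id, and Gᵢ(X) = (A·f(A)⋯fⁱ⁻¹(A))·fⁱ(X)·(fⁱ⁻¹(B)⋯f(B)·B). If 𝒳 solves the Stein equation 𝒳 = Gₙ(𝒳) + Σ_{i=0}^{n-1} Gᵢ(C), then Σ_{i=0}^{n-1} Gᵢ(F(𝒳)) = Σ_{i=0}^{n-1} Gᵢ(𝒳), where F(𝒳) = (1/n)·Σ_{i=0}^{n-1} (Gᵢ(𝒳) + (n−i−1)·Gᵢ(C)). -/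
open Finset

/-- Ordered product `A · f(A) · f²(A) ⋯ f^{i-1}(A)`. -/
noncomputable def prodA {m : ℕ} (f : Matrix (Fin m) (Fin m) ℂ → Matrix (Fin m) (Fin m) ℂ)
    (A : Matrix (Fin m) (Fin m) ℂ) : ℕ → Matrix (Fin m) (Fin m) ℂ
  | 0 => 1
  | i + 1 => prodA f A i * f^[i] A

/-- Ordered product `f^{i-1}(B) ⋯ f(B) · B`. -/
noncomputable def prodB {m : ℕ} (f : Matrix (Fin m) (Fin m) ℂ → Matrix (Fin m) (Fin m) ℂ)
    (B : Matrix (Fin m) (Fin m) ℂ) : ℕ → Matrix (Fin m) (Fin m) ℂ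
  | 0 => 1
  | i + 1 => f^[i] B * prodB f B i

/-- `Gᵢ(X) = (A·f(A)⋯f^{i-1}(A)) · fⁱ(X) · (f^{i-1}(B)⋯f(B)·B)`. -/
noncomputable def G {m : ℕ} (f : Matrix (Fin m) (Fin m) ℂ → Matrix (Fin m) (Fin m) ℂ)
    (A B : Matrix (Fin m) (Fin m) ℂ) (i : ℕ) (X : Matrix (Fin m) (Fin m) ℂ) :
    Matrix (Fin m) (Fin m) ℂ :=
  prodA f A i * f^[i] X * prodB f B i

/-- The averaging operator `F(𝒳) = (1/n)·Σ_{i<n} (Gᵢ(𝒳) + (n−i−1)·Gᵢ(C))`. -/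
noncomputable def Fop {m : ℕ} (f : Matrix (Fin m) (Fin m) ℂ → Matrix (Fin m) (Fin m) ℂ)
    (A B C : Matrix (Fin m) (Fin m) ℂ) (n : ℕ) (𝒳 : Matrix (Fin m) (Fin m) ℂ) :
    Matrix (Fin m) (Fin m) ℂ :=
  ((n : ℂ)⁻¹) • ∑ i ∈ range n, (G f A B i 𝒳 + ((n - i - 1 : ℕ) : ℂ) • G f A B i C)

section Aux

variable {m : ℕ} (f : Matrix (Fin m) (Fin m) ℂ → Matrix (Fin m) (Fin m) ℂ)
  (A B : Matrix (Fin m) (Fin m) ℂ)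

lemma iter_lin (hlin : IsLinearMap ℂ f) (k : ℕ) : IsLinearMap ℂ (f^[k]) := by
  induction k with
  | zero => exact ⟨fun _ _ => rfl, fun _ _ => rfl⟩
  | succ k ih =>
    constructor
    · intro x y
      rw [Function.iterate_succ_apply, hlin.map_add, ih.map_add,
        ← Function.iterate_succ_apply, ← Function.iterate_succ_apply]
    · intro c x
      rw [Function.iterate_succ_apply, hlin.map_smul, ih.map_smul,
        ← Function.iterate_succ_apply]

lemma iter_mul (hmul : ∀ X Y, f (X * Y) = f X * f Y) (k : ℕ)
    (X Y : Matrix (Fin m) (Fin m) ℂ) : f^[k] (X * Y) = f^[k] X * f^[k] Y := by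
  induction k generalizing X Y with
  | zero => rfl
  | succ k ih =>
    rw [Function.iterate_succ_apply, hmul, ih,
      ← Function.iterate_succ_apply, ← Function.iterate_succ_apply]

lemma f_one {n : ℕ} (hn : 0 < n) (hmul : ∀ X Y, f (X * Y) = f X * f Y)
    (hper : f^[n] = id) : f 1 = 1 := by
  have hsurj : f (f^[n-1] 1) = 1 := by
    have h := (Function.iterate_succ_apply' f (n-1) (1 : Matrix (Fin m) (Fin m) ℂ)).symm
    rw [h]
    have h2 : (n - 1).succ = n := by omega
    rw [h2, hper]
    rfl
  calc f 1 = f 1 * f (f^[n-1] 1) := by rw [hsurj, mul_one]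
    _ = f (1 * f^[n-1] 1) := (hmul _ _).symm
    _ = 1 := by rw [one_mul, hsurj]

lemma iter_one {n : ℕ} (hn : 0 < n) (hmul : ∀ X Y, f (X * Y) = f X * f Y)
    (hper : f^[n] = id) (k : ℕ) : f^[k] (1 : Matrix (Fin m) (Fin m) ℂ) = 1 := by
  induction k with
  | zero => rfl
  | succ k ih => rw [Function.iterate_succ_apply, f_one f hn hmul hper, ih]

lemma prodA_add {n : ℕ} (hn : 0 < n) (hmul : ∀ X Y, f (X * Y) = f X * f Y)
    (hper : f^[n] = id) (i j : ℕ) :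
    prodA f A (i + j) = prodA f A i * f^[i] (prodA f A j) := by
  induction j with
  | zero => simp [prodA, iter_one f hn hmul hper]
  | succ j ih =>
    show prodA f A (i + j) * f^[i + j] A = _
    rw [ih, Function.iterate_add_apply, mul_assoc]
    show _ = prodA f A i * f^[i] (prodA f A j * f^[j] A)
    rw [iter_mul f hmul]

lemma prodB_add {n : ℕ} (hn : 0 < n) (hmul : ∀ X Y, f (X * Y) = f X * f Y)
    (hper : f^[n] = id) (i j : ℕ) :
    prodB f B (i + j) = f^[i] (prodB f B j) * prodB f B i := by
  induction j with
  | zero => simp [prodB, iter_one f hn hmul hper]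
  | succ j ih =>
    show f^[i + j] B * prodB f B (i + j) = _
    rw [ih, Function.iterate_add_apply, ← mul_assoc]
    show _ = f^[i] (f^[j] B * prodB f B j) * prodB f B i
    rw [iter_mul f hmul]

lemma G_comp {n : ℕ} (hn : 0 < n) (hmul : ∀ X Y, f (X * Y) = f X * f Y)
    (hper : f^[n] = id) (i j : ℕ) (X : Matrix (Fin m) (Fin m) ℂ) :
    G f A B i (G f A B j X) = G f A B (i + j) X := by
  unfold G
  rw [iter_mul f hmul, iter_mul f hmul, prodA_add f A hn hmul hper,
    prodB_add f B hn hmul hper, Function.iterate_add_apply]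
  simp only [mul_assoc]

/-- `G` as a linear map in `X`. -/
noncomputable def Gmap (hlin : IsLinearMap ℂ f) (i : ℕ) :
    Matrix (Fin m) (Fin m) ℂ →ₗ[ℂ] Matrix (Fin m) (Fin m) ℂ where
  toFun := G f A B i
  map_add' X Y := by
    unfold G
    rw [(iter_lin f hlin i).map_add, mul_add, add_mul]
  map_smul' c X := by
    show prodA f A i * f^[i] (c • X) * prodB f B i = c • (prodA f A i * f^[i] X * prodB f B i)
    rw [(iter_lin f hlin i).map_smul]
    simp [mul_smul_comm, smul_mul_assoc]

lemma tri_sum {M : Type*} [AddCommMonoid M] (a : ℕ → M) (n : ℕ) :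
    ∑ j ∈ range n, ∑ k ∈ range j, a k = ∑ k ∈ range n, (n - 1 - k) • a k := by
  induction n with
  | zero => simp
  | succ n ih =>
    rw [Finset.sum_range_succ, ih, Finset.sum_range_succ, ← Finset.sum_add_distrib]
    have h0 : n + 1 - 1 - n = 0 := by omega
    rw [h0, zero_nsmul, add_zero]
    refine Finset.sum_congr rfl fun k hk => ?_
    have hk' : k < n := Finset.mem_range.mp hk
    have h1 : n + 1 - 1 - k = (n - 1 - k) + 1 := by omega
    rw [h1, succ_nsmul]

end Aux

theorem stmt_8 {m n : ℕ} (hn : 0 < n)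
    (f : Matrix (Fin m) (Fin m) ℂ → Matrix (Fin m) (Fin m) ℂ)
    (hlin : IsLinearMap ℂ f) (hmul : ∀ X Y, f (X * Y) = f X * f Y)
    (hper : f^[n] = id)
    (A B C 𝒳 : Matrix (Fin m) (Fin m) ℂ)
    (h𝒳 : 𝒳 = G f A B n 𝒳 + ∑ i ∈ range n, G f A B i C) :
    ∑ i ∈ range n, G f A B i (Fop f A B C n 𝒳) = ∑ i ∈ range n, G f A B i 𝒳 := by
  have hGadd : ∀ i (X Y : Matrix (Fin m) (Fin m) ℂ),
      G f A B i (X + Y) = G f A B i X + G f A B i Y :=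
    fun i X Y => (Gmap f A B hlin i).map_add X Y
  have hGsmul : ∀ i (c : ℂ) (X : Matrix (Fin m) (Fin m) ℂ),
      G f A B i (c • X) = c • G f A B i X :=
    fun i c X => (Gmap f A B hlin i).map_smul c X
  have hGsum : ∀ i (s : Finset ℕ) (g : ℕ → Matrix (Fin m) (Fin m) ℂ),
      G f A B i (∑ k ∈ s, g k) = ∑ k ∈ s, G f A B i (g k) :=
    fun i s g => map_sum (Gmap f A B hlin i) g s
  have hGcomp : ∀ i j (X : Matrix (Fin m) (Fin m) ℂ),
      G f A B i (G f A B j X) = G f A B (i + j) X :=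
    fun i j X => G_comp f A B hn hmul hper i j X
  -- recursion from the Stein equation
  have hrec : ∀ j, G f A B j 𝒳 =
      G f A B (n + j) 𝒳 + ∑ l ∈ range n, G f A B (j + l) C := by
    intro j
    conv_lhs => rw [h𝒳]
    rw [hGadd, hGcomp, hGsum, Nat.add_comm j n]
    congr 1
    exact Finset.sum_congr rfl fun l _ => hGcomp j l C
  -- shift identity
  have hshift : ∀ j, ∑ i ∈ range n, G f A B (i + (j + 1)) 𝒳 =
      (∑ i ∈ range n, G f A B (i + j) 𝒳) - ∑ l ∈ range n, G f A B (j + l) C := by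
    intro j
    have h1 := Finset.sum_range_succ' (fun i => G f A B (i + j) 𝒳) n
    have h2 := Finset.sum_range_succ (fun i => G f A B (i + j) 𝒳) n
    have h3 : ∀ i : ℕ, i + 1 + j = i + (j + 1) := fun i => by omega
    simp only [h3] at h1
    have h4 : G f A B (n + j) 𝒳 = G f A B j 𝒳 - ∑ l ∈ range n, G f A B (j + l) C := by
      rw [hrec j]; abel
    have h5 : (∑ i ∈ range n, G f A B (i + (j + 1)) 𝒳) + G f A B (0 + j) 𝒳 =
        (∑ i ∈ range n, G f A B (i + j) 𝒳) + G f A B (n + j) 𝒳 := by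
      rw [← h1, h2]
    rw [h4] at h5
    simp only [Nat.zero_add] at h5
    have := congrArg (fun z => z - G f A B j 𝒳) h5
    calc ∑ i ∈ range n, G f A B (i + (j + 1)) 𝒳
        = (∑ i ∈ range n, G f A B (i + (j + 1)) 𝒳) + G f A B j 𝒳 - G f A B j 𝒳 := by abel
      _ = _ := by rw [h5]; abel
  -- key telescoping identity
  have hkey : ∀ j, (∑ i ∈ range n, G f A B (i + j) 𝒳)
      + ∑ k ∈ range j, ∑ l ∈ range n, G f A B (k + l) C
      = ∑ i ∈ range n, G f A B i 𝒳 := by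
    intro j
    induction j with
    | zero => simp
    | succ j ih =>
      rw [hshift j, Finset.sum_range_succ, ← ih]
      abel
  -- compute G i (Fop ...)
  have hGF : ∀ i, G f A B i (Fop f A B C n 𝒳) =
      ((n : ℂ)⁻¹) • ∑ j ∈ range n,
        (G f A B (i + j) 𝒳 + ((n - j - 1 : ℕ) : ℂ) • G f A B (i + j) C) := by
    intro i
    unfold Fop
    rw [hGsmul, hGsum]
    congr 1
    refine Finset.sum_congr rfl fun j _ => ?_
    rw [hGadd, hGsmul, hGcomp, hGcomp]
  simp only [hGF]
  rw [← Finset.smul_sum]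
  have hsplit : ∑ i ∈ range n, ∑ j ∈ range n,
      (G f A B (i + j) 𝒳 + ((n - j - 1 : ℕ) : ℂ) • G f A B (i + j) C)
      = (∑ i ∈ range n, ∑ j ∈ range n, G f A B (i + j) 𝒳)
        + ∑ i ∈ range n, ∑ j ∈ range n, ((n - j - 1 : ℕ) : ℂ) • G f A B (i + j) C := by
    rw [← Finset.sum_add_distrib]
    exact Finset.sum_congr rfl fun i _ => Finset.sum_add_distrib
  rw [hsplit]
  -- part 1
  have hpart1 : ∑ i ∈ range n, ∑ j ∈ range n, G f A B (i + j) 𝒳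
      = n • (∑ i ∈ range n, G f A B i 𝒳)
        - ∑ k ∈ range n, (n - 1 - k) • ∑ l ∈ range n, G f A B (k + l) C := by
    rw [Finset.sum_comm]
    have : ∀ j ∈ range n, ∑ i ∈ range n, G f A B (i + j) 𝒳
        = (∑ i ∈ range n, G f A B i 𝒳) - ∑ k ∈ range j, ∑ l ∈ range n, G f A B (k + l) C := by
      intro j _
      rw [← hkey j]; abel
    rw [Finset.sum_congr rfl this, Finset.sum_sub_distrib, Finset.sum_const,
      Finset.card_range, tri_sum]
  -- part 2
  have hpart2 : ∑ i ∈ range n, ∑ j ∈ range n, ((n - j - 1 : ℕ) : ℂ) • G f A B (i + j) C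
      = ∑ k ∈ range n, (n - 1 - k) • ∑ l ∈ range n, G f A B (k + l) C := by
    rw [Finset.sum_comm]
    refine Finset.sum_congr rfl fun j _ => ?_
    rw [← Finset.smul_sum, Nat.cast_smul_eq_nsmul]
    have h6 : n - j - 1 = n - 1 - j := by omega
    rw [h6]
    congr 1
    exact Finset.sum_congr rfl fun i _ => by rw [Nat.add_comm]
  rw [hpart1, hpart2]
  have hcomb : n • (∑ i ∈ range n, G f A B i 𝒳)
      - (∑ k ∈ range n, (n - 1 - k) • ∑ l ∈ range n, G f A B (k + l) C)
      + ∑ k ∈ range n, (n - 1 - k) • ∑ l ∈ range n, G f A B (k + l) C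
      = n • (∑ i ∈ range n, G f A B i 𝒳) := by abel
  rw [hcomb, ← Nat.cast_smul_eq_nsmul ℂ, smul_smul,
    inv_mul_cancel₀ (by exact_mod_cast hn.ne' : (n : ℂ) ≠ 0), one_smul]
end

section
/- For m×m complex matrices 𝒜, ℬ, 𝒞 with ρ(𝒜)·ρ(ℬ) < 1, the Smith iteration X₀ = 0, X_{k+1} = 𝒜·X_k·ℬ + 𝒞 converges to the unique solution X of the Stein equation X = 𝒜·X·ℬ + 𝒞, and X_k = Σ_{j=0}^{k-1} 𝒜ʲ·𝒞·ℬʲ for all k. -/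
open Finset Filter
open scoped ENNReal NNReal

/-- Spectral radius of a complex matrix: supremum of the absolute values of its
eigenvalues. -/
noncomputable def specRad {m : ℕ} (A : Matrix (Fin m) (Fin m) ℂ) : ℝ :=
  sSup ((fun z : ℂ => ‖z‖) '' spectrum ℂ A)

section Aux

attribute [local instance] Matrix.linftyOpNormedRing Matrix.linftyOpNormedAlgebra

variable {m : ℕ}

lemma specRad_nonneg (A : Matrix (Fin m) (Fin m) ℂ) : 0 ≤ specRad A :=
  Real.sSup_nonneg (by rintro x ⟨z, -, rfl⟩; exact norm_nonneg z)

lemma spectralRadius_le_ofReal (A : Matrix (Fin m) (Fin m) ℂ) :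
    spectralRadius ℂ A ≤ ENNReal.ofReal (specRad A) := by
  rw [spectralRadius]
  refine iSup₂_le fun k hk => ?_
  have hbdd : BddAbove ((fun z : ℂ => ‖z‖) '' spectrum ℂ A) :=
    ((spectrum.isCompact A).image continuous_norm).bddAbove
  have hle : ‖k‖ ≤ specRad A := le_csSup hbdd ⟨k, hk, rfl⟩
  calc (‖k‖₊ : ℝ≥0∞) = ENNReal.ofReal ‖k‖ := (ofReal_norm k).symm
    _ ≤ _ := ENNReal.ofReal_le_ofReal (by simpa using hle)

lemma key_bound (A B : Matrix (Fin m) (Fin m) ℂ) (h : specRad A * specRad B < 1) :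
    ∃ c : ℝ≥0, c < 1 ∧ ∀ᶠ n : ℕ in atTop, ‖A ^ n‖ * ‖B ^ n‖ ≤ (c : ℝ) ^ n := by
  have hrad : spectralRadius ℂ A * spectralRadius ℂ B < 1 := by
    calc spectralRadius ℂ A * spectralRadius ℂ B
        ≤ ENNReal.ofReal (specRad A) * ENNReal.ofReal (specRad B) :=
          mul_le_mul' (spectralRadius_le_ofReal A) (spectralRadius_le_ofReal B)
      _ = ENNReal.ofReal (specRad A * specRad B) :=
          (ENNReal.ofReal_mul (specRad_nonneg A)).symm
      _ < 1 := by
          rw [← ENNReal.ofReal_one]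
          exact ENNReal.ofReal_lt_ofReal_iff (by norm_num) |>.mpr h
  obtain ⟨c, hc1, hc2⟩ := ENNReal.lt_iff_exists_nnreal_btwn.mp hrad
  have hc2' : c < 1 := by exact_mod_cast hc2
  refine ⟨c, hc2', ?_⟩
  have hAfin : spectralRadius ℂ A ≠ ⊤ :=
    ne_top_of_le_ne_top ENNReal.ofReal_ne_top (spectralRadius_le_ofReal A)
  have hBfin : spectralRadius ℂ B ≠ ⊤ :=
    ne_top_of_le_ne_top ENNReal.ofReal_ne_top (spectralRadius_le_ofReal B)
  have hA := spectrum.pow_nnnorm_pow_one_div_tendsto_nhds_spectralRadius A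
  have hB := spectrum.pow_nnnorm_pow_one_div_tendsto_nhds_spectralRadius B
  have hmul : Tendsto (fun n : ℕ =>
      (‖A ^ n‖₊ : ℝ≥0∞) ^ (1 / (n : ℝ)) * (‖B ^ n‖₊ : ℝ≥0∞) ^ (1 / (n : ℝ)))
      atTop (nhds (spectralRadius ℂ A * spectralRadius ℂ B)) :=
    ENNReal.Tendsto.mul hA (Or.inr hBfin) hB (Or.inr hAfin)
  have hev : ∀ᶠ n : ℕ in atTop,
      (‖A ^ n‖₊ : ℝ≥0∞) ^ (1 / (n : ℝ)) * (‖B ^ n‖₊ : ℝ≥0∞) ^ (1 / (n : ℝ)) < (c : ℝ≥0∞) :=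
    hmul.eventually_lt_const hc1
  filter_upwards [hev, eventually_ge_atTop 1] with n hn hn1
  have hnR : (0 : ℝ) < (n : ℝ) := by exact_mod_cast hn1
  have hprod : ((‖A ^ n‖₊ * ‖B ^ n‖₊ : ℝ≥0) : ℝ≥0∞) ^ (1 / (n : ℝ)) < (c : ℝ≥0∞) := by
    rw [ENNReal.coe_mul, ENNReal.mul_rpow_of_nonneg _ _ (by positivity)]
    exact hn
  have hlt : ((‖A ^ n‖₊ * ‖B ^ n‖₊ : ℝ≥0) : ℝ≥0∞) < (c : ℝ≥0∞) ^ (n : ℝ) := by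
    have := ENNReal.rpow_lt_rpow hprod hnR
    rwa [← ENNReal.rpow_mul, one_div, inv_mul_cancel₀ hnR.ne', ENNReal.rpow_one] at this
  rw [← ENNReal.coe_rpow_of_nonneg _ hnR.le, ENNReal.coe_lt_coe,
    NNReal.rpow_natCast] at hlt
  have hle : ‖A ^ n‖₊ * ‖B ^ n‖₊ ≤ c ^ n := hlt.le
  calc ‖A ^ n‖ * ‖B ^ n‖ = ((‖A ^ n‖₊ * ‖B ^ n‖₊ : ℝ≥0) : ℝ) := by
        simp [NNReal.coe_mul]
    _ ≤ ((c ^ n : ℝ≥0) : ℝ) := by exact_mod_cast hle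
    _ = (c : ℝ) ^ n := by simp

lemma main_aux (𝒜 ℬ 𝒞 : Matrix (Fin m) (Fin m) ℂ)
    (hρ : specRad 𝒜 * specRad ℬ < 1)
    (Xseq : ℕ → Matrix (Fin m) (Fin m) ℂ)
    (h0 : Xseq 0 = 0) (hrec : ∀ k, Xseq (k + 1) = 𝒜 * Xseq k * ℬ + 𝒞) :
    (∃! X : Matrix (Fin m) (Fin m) ℂ, X = 𝒜 * X * ℬ + 𝒞) ∧
    (∀ k, Xseq k = ∑ j ∈ range k, 𝒜 ^ j * 𝒞 * ℬ ^ j) ∧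
    (∀ X : Matrix (Fin m) (Fin m) ℂ, X = 𝒜 * X * ℬ + 𝒞 →
      Tendsto Xseq atTop (nhds X)) := by
  obtain ⟨c, hc1, hev⟩ := key_bound 𝒜 ℬ hρ
  -- partial sum formula
  have hsum : ∀ k, Xseq k = ∑ j ∈ range k, 𝒜 ^ j * 𝒞 * ℬ ^ j := by
    intro k
    induction k with
    | zero => simpa using h0
    | succ k ih =>
      rw [hrec, ih, Finset.sum_range_succ']
      simp only [Finset.mul_sum, Finset.sum_mul]
      congr 1
      · refine Finset.sum_congr rfl fun j _ => ?_
        rw [pow_succ', pow_succ]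
        noncomm_ring
      · simp
  -- summability
  have hsummable : Summable fun j : ℕ => 𝒜 ^ j * 𝒞 * ℬ ^ j := by
    refine Summable.of_norm_bounded_eventually_nat (g := fun j => ‖𝒞‖ * (c : ℝ) ^ j)
      ((summable_geometric_of_lt_one c.coe_nonneg (by exact_mod_cast hc1)).mul_left _) ?_
    filter_upwards [hev] with n hn
    calc ‖𝒜 ^ n * 𝒞 * ℬ ^ n‖ ≤ ‖𝒜 ^ n‖ * ‖𝒞‖ * ‖ℬ ^ n‖ :=
          (norm_mul_le _ _).trans (by gcongr; exact norm_mul_le _ _)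
      _ = ‖𝒞‖ * (‖𝒜 ^ n‖ * ‖ℬ ^ n‖) := by ring
      _ ≤ ‖𝒞‖ * ((c : ℝ) ^ n) := mul_le_mul_of_nonneg_left hn (norm_nonneg _)
  obtain ⟨S, hS⟩ := hsummable
  have htend : Tendsto Xseq atTop (nhds S) := by
    rw [funext hsum]
    exact hS.tendsto_sum_nat
  have hfixed : S = 𝒜 * S * ℬ + 𝒞 := by
    have h1 : Tendsto (fun k => Xseq (k + 1)) atTop (nhds S) :=
      htend.comp (tendsto_add_atTop_nat 1)
    have hcont : Continuous fun X : Matrix (Fin m) (Fin m) ℂ => 𝒜 * X * ℬ + 𝒞 :=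
      (((continuous_const.mul continuous_id).mul continuous_const).add continuous_const)
    have h2 : Tendsto (fun k => 𝒜 * Xseq k * ℬ + 𝒞) atTop (nhds (𝒜 * S * ℬ + 𝒞)) :=
      (hcont.tendsto S).comp htend
    exact tendsto_nhds_unique (by simpa [hrec] using h1) h2
  have huniq : ∀ X Y : Matrix (Fin m) (Fin m) ℂ,
      X = 𝒜 * X * ℬ + 𝒞 → Y = 𝒜 * Y * ℬ + 𝒞 → X = Y := by
    intro X Y hX hY
    have hD : ∀ k, X - Y = 𝒜 ^ k * (X - Y) * ℬ ^ k := by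
      intro k
      induction k with
      | zero => simp
      | succ k ih =>
        have h1 : X - Y = 𝒜 * (X - Y) * ℬ := by
          conv_lhs => rw [hX, hY]
          noncomm_ring
        calc X - Y = 𝒜 * (X - Y) * ℬ := h1
          _ = 𝒜 * (𝒜 ^ k * (X - Y) * ℬ ^ k) * ℬ := by rw [← ih]
          _ = 𝒜 ^ (k + 1) * (X - Y) * ℬ ^ (k + 1) := by
              rw [pow_succ', pow_succ]; noncomm_ring
    have hnorm : ∀ᶠ k : ℕ in atTop, ‖X - Y‖ ≤ ‖X - Y‖ * (c : ℝ) ^ k := by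
      filter_upwards [hev] with k hk
      calc ‖X - Y‖ = ‖𝒜 ^ k * (X - Y) * ℬ ^ k‖ := by rw [← hD k]
        _ ≤ ‖𝒜 ^ k‖ * ‖X - Y‖ * ‖ℬ ^ k‖ :=
            (norm_mul_le _ _).trans (by gcongr; exact norm_mul_le _ _)
        _ = ‖X - Y‖ * (‖𝒜 ^ k‖ * ‖ℬ ^ k‖) := by ring
        _ ≤ ‖X - Y‖ * ((c : ℝ) ^ k) := mul_le_mul_of_nonneg_left hk (norm_nonneg _)
    have htend0 : Tendsto (fun k : ℕ => ‖X - Y‖ * (c : ℝ) ^ k) atTop (nhds 0) := by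
      simpa using (tendsto_pow_atTop_nhds_zero_of_lt_one c.coe_nonneg
        (by exact_mod_cast hc1)).const_mul ‖X - Y‖
    have hle0 : ‖X - Y‖ ≤ 0 := ge_of_tendsto htend0 hnorm
    have : X - Y = 0 := by
      rw [← norm_le_zero_iff]; exact hle0
    exact sub_eq_zero.mp this
  refine ⟨⟨S, hfixed, fun X hX => huniq X S hX hfixed⟩, hsum, fun X hX => ?_⟩
  rw [huniq X S hX hfixed]
  exact htend

end Aux

theorem stmt_13 {m : ℕ} (𝒜 ℬ 𝒞 : Matrix (Fin m) (Fin m) ℂ)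
    (hρ : specRad 𝒜 * specRad ℬ < 1)
    (Xseq : ℕ → Matrix (Fin m) (Fin m) ℂ)
    (h0 : Xseq 0 = 0) (hrec : ∀ k, Xseq (k + 1) = 𝒜 * Xseq k * ℬ + 𝒞) :
    (∃! X : Matrix (Fin m) (Fin m) ℂ, X = 𝒜 * X * ℬ + 𝒞) ∧
    (∀ k, Xseq k = ∑ j ∈ range k, 𝒜 ^ j * 𝒞 * ℬ ^ j) ∧
    (∀ X : Matrix (Fin m) (Fin m) ℂ, X = 𝒜 * X * ℬ + 𝒞 →
      Tendsto Xseq atTop (nhds X)) :=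
  main_aux 𝒜 ℬ 𝒞 hρ Xseq h0 hrec
end
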